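/- Let Y be an uncountable Hausdorff quasi-Polish space. Then the Cantor space 2^ω embeds topologically into Y (i.e., there is a map 2^ω → Y that is a homeomorphism onto its image). -/
import Mathlib

open TopologicalSpace Set Filter Topology

/-- `d` is a complete quasi-metric on `X` compatible with its topology. -/
def IsCompleteQuasiMetric {X : Type*} [t : TopologicalSpace X] (d : X → X → ℝ) : Prop :=
  (∀ x y : X, 0 ≤ d x y) ∧
  (∀ x y : X, (d x y = 0 ∧ d y x = 0) ↔ x = y) ∧
  (∀ x y z : X, d x z ≤ d x y + d y z) ∧
  (t = TopologicalSpace.generateFrom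
    {B : Set X | ∃ (x : X) (ε : ℝ), 0 < ε ∧ B = {y : X | d x y < ε}}) ∧
  (∀ u : ℕ → X,
    (∀ ε : ℝ, 0 < ε → ∃ N : ℕ, ∀ m n : ℕ, N ≤ m → m ≤ n → d (u m) (u n) < ε) →
    ∃ x : X, ∀ ε : ℝ, 0 < ε → ∃ N : ℕ, ∀ n : ℕ, N ≤ n →
      max (d x (u n)) (d (u n) x) < ε)

/-- A quasi-Polish space: a countably based T₀ space admitting a compatible complete
quasi-metric. -/
def IsQuasiPolish (X : Type*) [TopologicalSpace X] : Prop :=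
  SecondCountableTopology X ∧ T0Space X ∧ ∃ d : X → X → ℝ, IsCompleteQuasiMetric d

private def buildNode {Y : Type*} (root : Y × ℝ) (step : Bool → Y × ℝ → Y × ℝ) :
    List Bool → Y × ℝ
  | [] => root
  | i :: s => step i (buildNode root step s)

private def preList (σ : ℕ → Bool) : ℕ → List Bool
  | 0 => []
  | n + 1 => σ n :: preList σ n

private lemma preList_eq {σ τ : ℕ → Bool} {m : ℕ} (h : ∀ k < m, σ k = τ k) :
    preList σ m = preList τ m := by
  induction m with
  | zero => rfl
  | succ n ih =>
    simp only [preList, h n (Nat.lt_succ_self n),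
      ih (fun k hk => h k (Nat.lt_succ_of_lt hk))]

/-- The Cantor space embeds topologically into every uncountable Hausdorff
quasi-Polish space. -/
theorem cantor_embeds_into_uncountable_hausdorff_quasiPolish {Y : Type*}
    [TopologicalSpace Y] [T2Space Y] (hqp : IsQuasiPolish Y) (hunc : ¬ Countable Y) :
    ∃ φ : (ℕ → Bool) → Y, Topology.IsEmbedding φ := by
  classical
  obtain ⟨hsc, ht0, d, hpos, hzero, htri, hgen, hcomp⟩ := hqp
  haveI := hsc
  haveI := ht0
  have hxx : ∀ x : Y, d x x = 0 := fun x => ((hzero x x).mpr rfl).1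
  -- forward balls are open
  have ballOpen : ∀ (z : Y) (ε : ℝ), 0 < ε → IsOpen {y : Y | d z y < ε} := by
    intro z ε hε
    rw [hgen]
    exact TopologicalSpace.GenerateOpen.basic _ ⟨z, ε, hε, rfl⟩
  -- every open set contains a forward ball around each of its points
  have ballBasis : ∀ U : Set Y, IsOpen U → ∀ a ∈ U, ∃ δ > 0, ∀ y, d a y < δ → y ∈ U := by
    intro U hU
    rw [hgen] at hU
    induction hU with
    | basic B hB =>
      obtain ⟨z, ε, hε, rfl⟩ := hB
      intro a ha
      have ha' : d z a < ε := ha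
      refine ⟨ε - d z a, by linarith, fun y hy => ?_⟩
      have := htri z a y
      show d z y < ε
      linarith
    | univ => exact fun a _ => ⟨1, one_pos, fun _ _ => trivial⟩
    | inter U V _ _ ihU ihV =>
      intro a ha
      obtain ⟨δ1, h1, hb1⟩ := ihU a ha.1
      obtain ⟨δ2, h2, hb2⟩ := ihV a ha.2
      exact ⟨min δ1 δ2, lt_min h1 h2, fun y hy =>
        ⟨hb1 y (hy.trans_le (min_le_left _ _)), hb2 y (hy.trans_le (min_le_right _ _))⟩⟩
    | sUnion T _ ih =>
      intro a ha
      obtain ⟨t, htT, hat⟩ := ha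
      obtain ⟨δ, hδ, hb⟩ := ih t htT a hat
      exact ⟨δ, hδ, fun y hy => ⟨t, htT, hb y hy⟩⟩
  -- forward-distance convergence implies topological convergence
  have tendstoOf : ∀ (a : Y) (x : ℕ → Y), (∀ n : ℕ, d a (x n) ≤ 1 / (n + 1)) →
      Tendsto x atTop (𝓝 a) := by
    intro a x hx
    rw [tendsto_nhds]
    intro U hU haU
    obtain ⟨δ, hδ, hb⟩ := ballBasis U hU a haU
    obtain ⟨N, hN⟩ := exists_nat_one_div_lt hδ
    refine eventually_atTop.mpr ⟨N, fun n hn => hb _ ?_⟩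
    have h1 : (1 : ℝ) / (n + 1) ≤ 1 / (N + 1) := by
      apply one_div_le_one_div_of_le
      · positivity
      · exact_mod_cast Nat.succ_le_succ hn
    exact lt_of_le_of_lt (le_trans (hx n) h1) hN
  -- separation of distinct points by closed forward balls
  have sep : ∀ a b : Y, a ≠ b → ∃ r > 0, ∀ y, ¬(d a y ≤ r ∧ d b y ≤ r) := by
    intro a b hab
    by_contra h
    push_neg at h
    choose f hf using fun n : ℕ => h (1 / (n + 1)) (by positivity)
    exact hab (tendsto_nhds_unique (tendstoOf a f fun n => (hf n).1)
      (tendstoOf b f fun n => (hf n).2))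
  -- the set of condensation points
  set S : Set Y := {y | ∀ U : Set Y, IsOpen U → y ∈ U → ¬ U.Countable} with hSdef
  have hcompl : (Sᶜ).Countable := by
    have hsub : Sᶜ ⊆ ⋃₀ {B ∈ countableBasis Y | B.Countable} := by
      intro y hy
      simp only [hSdef, mem_compl_iff, mem_setOf_eq, not_forall, not_not] at hy
      obtain ⟨U, hU, hyU, hUc⟩ := hy
      obtain ⟨V, hVB, hyV, hVU⟩ :=
        (isBasis_countableBasis Y).exists_subset_of_mem_open hyU hU
      exact ⟨V, ⟨hVB, hUc.mono hVU⟩, hyV⟩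
    exact (Set.Countable.sUnion
      ((countable_countableBasis Y).mono (sep_subset _ _))
      (fun t ht => ht.2)).mono hsub
  have hSpick : ∀ U : Set Y, IsOpen U → ∀ y ∈ U, y ∈ S →
      ∃ a, (a ∈ S ∧ a ∈ U) ∧ ∃ b, (b ∈ S ∧ b ∈ U) ∧ a ≠ b := by
    intro U hU y hyU hyS
    by_contra h
    push_neg at h
    have hsub : (S ∩ U).Subsingleton := by
      intro a ha b hb
      by_contra hne
      exact hne (by_contra fun hne' => hne' (by
        exact absurd (h a ⟨ha.1, ha.2⟩ b ⟨hb.1, hb.2⟩) (fun he => hne he)))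
    have hUc : U.Countable := by
      have : U ⊆ (S ∩ U) ∪ Sᶜ := by
        intro z hz
        by_cases hzS : z ∈ S
        · exact Or.inl ⟨hzS, hz⟩
        · exact Or.inr hzS
      exact (hsub.countable.union hcompl).mono this
    exact hyS U hU hyU hUc
  have hSne : S.Nonempty := by
    by_contra h
    rw [not_nonempty_iff_eq_empty] at h
    apply hunc
    rw [← Set.countable_univ_iff]
    have : (univ : Set Y) = Sᶜ := by rw [h, compl_empty]
    rw [this]
    exact hcompl
  -- the choice of children at each node
  have hstep : ∀ p : Y × ℝ, ∃ q : Y × Y × ℝ,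
      p.1 ∈ S → 0 < p.2 →
        (q.1 ∈ S ∧ q.2.1 ∈ S ∧ q.1 ≠ q.2.1 ∧ d p.1 q.1 < p.2 / 2 ∧ d p.1 q.2.1 < p.2 / 2 ∧
         0 < q.2.2 ∧ q.2.2 ≤ p.2 / 2 ∧ ∀ y, ¬(d q.1 y ≤ q.2.2 ∧ d q.2.1 y ≤ q.2.2)) := by
    rintro ⟨x, r⟩
    by_cases hx : x ∈ S ∧ 0 < r
    · obtain ⟨hxS, hr⟩ := hx
      have hball := ballOpen x (r / 2) (by linarith)
      have hxball : x ∈ {y : Y | d x y < r / 2} := by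
        show d x x < r / 2
        rw [hxx]; linarith
      obtain ⟨a, ⟨haS, haB⟩, b, ⟨hbS, hbB⟩, hab⟩ := hSpick _ hball x hxball hxS
      obtain ⟨r0, hr0, hsep0⟩ := sep a b hab
      refine ⟨(a, b, min r0 (r / 2)), fun _ _ => ?_⟩
      exact ⟨haS, hbS, hab, haB, hbB, lt_min hr0 (by linarith), min_le_right _ _,
        fun y hy => hsep0 y ⟨hy.1.trans (min_le_left _ _), hy.2.trans (min_le_left _ _)⟩⟩
    · exact ⟨(x, x, 1), fun h1 h2 => absurd ⟨h1, h2⟩ hx⟩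
  choose F hF using hstep
  obtain ⟨y0, hy0⟩ := hSne
  let step : Bool → Y × ℝ → Y × ℝ := fun i p => (if i then (F p).1 else (F p).2.1, (F p).2.2)
  let node : List Bool → Y × ℝ := buildNode (y0, 1) step
  have hnode_cons : ∀ (i : Bool) (s : List Bool), node (i :: s) = step i (node s) :=
    fun _ _ => rfl
  have hnode_nil : node [] = (y0, 1) := rfl
  have hInv : ∀ s : List Bool, (node s).1 ∈ S ∧ 0 < (node s).2 := by
    intro s
    induction s with
    | nil => exact ⟨hy0, one_pos⟩
    | cons i s ih =>
      have h := hF (node s) ih.1 ih.2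
      rw [hnode_cons]
      cases i
      · exact ⟨h.2.1, h.2.2.2.2.2.1⟩
      · exact ⟨h.1, h.2.2.2.2.2.1⟩
  have hchild : ∀ (s : List Bool) (i : Bool),
      d (node s).1 (node (i :: s)).1 < (node s).2 / 2 ∧
      (node (i :: s)).2 ≤ (node s).2 / 2 := by
    intro s i
    have h := hF (node s) (hInv s).1 (hInv s).2
    rw [hnode_cons]
    cases i
    · exact ⟨h.2.2.2.2.1, h.2.2.2.2.2.2.1⟩
    · exact ⟨h.2.2.2.1, h.2.2.2.2.2.2.1⟩
  let u : (ℕ → Bool) → ℕ → Y := fun σ n => (node (preList σ n)).1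
  let rad : (ℕ → Bool) → ℕ → ℝ := fun σ n => (node (preList σ n)).2
  have hrad_pos : ∀ σ n, 0 < rad σ n := fun σ n => (hInv (preList σ n)).2
  have hu_succ : ∀ σ n, d (u σ n) (u σ (n + 1)) < rad σ n / 2 ∧
      rad σ (n + 1) ≤ rad σ n / 2 := fun σ n => hchild (preList σ n) (σ n)
  have hradb : ∀ σ n, rad σ n ≤ (1 / 2 : ℝ) ^ n := by
    intro σ n
    induction n with
    | zero => simp [rad, preList, hnode_nil]
    | succ n ih =>
      have h := (hu_succ σ n).2
      have : (1 / 2 : ℝ) ^ (n + 1) = (1 / 2 : ℝ) ^ n / 2 := by ring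
      rw [this]
      linarith
  have hfc : ∀ (σ : ℕ → Bool) (m n : ℕ), m ≤ n →
      d (u σ m) (u σ n) ≤ rad σ m - rad σ n := by
    intro σ m n hmn
    induction n with
    | zero =>
      obtain rfl : m = 0 := Nat.le_zero.mp hmn
      simp [hxx]
    | succ n ih =>
      rcases Nat.lt_or_ge m (n + 1) with h | h
      · have hm : m ≤ n := Nat.lt_succ_iff.mp h
        have h1 := ih hm
        have h2 := hu_succ σ n
        calc d (u σ m) (u σ (n + 1)) ≤ d (u σ m) (u σ n) + d (u σ n) (u σ (n + 1)) :=
              htri _ _ _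
          _ ≤ rad σ m - rad σ (n + 1) := by linarith [h2.1, h2.2]
      · obtain rfl : m = n + 1 := le_antisymm hmn h
        simp [hxx]
  -- Cauchy and limits
  have hcauchy : ∀ σ : ℕ → Bool, ∀ ε : ℝ, 0 < ε → ∃ N : ℕ, ∀ m n : ℕ, N ≤ m → m ≤ n →
      d (u σ m) (u σ n) < ε := by
    intro σ ε hε
    obtain ⟨N, hN⟩ := exists_pow_lt_of_lt_one hε (by norm_num : (1 / 2 : ℝ) < 1)
    refine ⟨N, fun m n hNm hmn => ?_⟩
    have h1 := hfc σ m n hmn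
    have h2 := hrad_pos σ n
    have h3 := hradb σ m
    have h4 : (1 / 2 : ℝ) ^ m ≤ (1 / 2 : ℝ) ^ N :=
      pow_le_pow_of_le_one (by norm_num) (by norm_num) hNm
    linarith
  have hlimex : ∀ σ : ℕ → Bool, ∃ x : Y, ∀ ε : ℝ, 0 < ε → ∃ N : ℕ, ∀ n : ℕ, N ≤ n →
      max (d x (u σ n)) (d (u σ n) x) < ε := fun σ => hcomp (u σ) (hcauchy σ)
  choose φ hφ using hlimex
  -- key bound: the limit stays in the closed forward ball of each node on the branch
  have hK : ∀ (σ : ℕ → Bool) (m : ℕ), d (u σ m) (φ σ) ≤ rad σ m := by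
    intro σ m
    refine le_of_forall_pos_le_add fun ε hε => ?_
    obtain ⟨N, hN⟩ := hφ σ ε hε
    have hmn : m ≤ max m N := le_max_left _ _
    have h1 := hfc σ m (max m N) hmn
    have h2 : d (u σ (max m N)) (φ σ) < ε :=
      lt_of_le_of_lt (le_max_right _ _) (hN _ (le_max_right _ _))
    have h3 := hrad_pos σ (max m N)
    have := htri (u σ m) (u σ (max m N)) (φ σ)
    linarith
  -- continuity
  have hcont : Continuous φ := by
    have hgen' : ∀ B ∈ {B : Set Y | ∃ (z : Y) (ε : ℝ), 0 < ε ∧ B = {y : Y | d z y < ε}},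
        IsOpen (φ ⁻¹' B) := by
      rintro B ⟨z, ε, hε, rfl⟩
      rw [isOpen_iff_mem_nhds]
      intro σ hσ
      have hσ' : d z (φ σ) < ε := hσ
      set η := ε - d z (φ σ) with hηdef
      have hη0 : 0 < η := by rw [hηdef]; linarith
      obtain ⟨N1, hN1⟩ := hφ σ (η / 3) (by linarith)
      obtain ⟨N2, hN2⟩ := exists_pow_lt_of_lt_one (show (0 : ℝ) < η / 3 by linarith)
        (by norm_num : (1 / 2 : ℝ) < 1)
      set m := max N1 N2 with hmdef
      have hsub : {τ : ℕ → Bool | ∀ k < m, τ k = σ k} ⊆ φ ⁻¹' {y : Y | d z y < ε} := by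
        intro τ hτ
        have hpre : preList τ m = preList σ m := preList_eq hτ
        have hu : u τ m = u σ m := by
          show (node (preList τ m)).1 = (node (preList σ m)).1
          rw [hpre]
        have h1 : d (φ σ) (u σ m) < η / 3 :=
          lt_of_le_of_lt (le_max_left _ _) (hN1 m (le_max_left _ _))
        have h2 : d (u τ m) (φ τ) ≤ rad τ m := hK τ m
        have h3 : rad τ m ≤ (1 / 2 : ℝ) ^ m := hradb τ m
        have h4 : (1 / 2 : ℝ) ^ m ≤ (1 / 2 : ℝ) ^ N2 :=
          pow_le_pow_of_le_one (by norm_num) (by norm_num) (le_max_right _ _)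
        have t1 := htri z (u τ m) (φ τ)
        have t2 := htri z (φ σ) (u σ m)
        rw [hu] at t1 h2
        show d z (φ τ) < ε
        have : d z (φ τ) ≤ d z (φ σ) + d (φ σ) (u σ m) + (rad τ m) := by linarith
        calc d z (φ τ) ≤ d z (φ σ) + d (φ σ) (u σ m) + rad τ m := this
          _ < d z (φ σ) + η / 3 + η / 3 := by linarith
          _ < ε := by linarith [hη0, hηdef]
      have hcyl : {τ : ℕ → Bool | ∀ k < m, τ k = σ k} ∈ 𝓝 σ := by
        have heq : {τ : ℕ → Bool | ∀ k < m, τ k = σ k} =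
            ⋂ k ∈ Finset.range m, (fun τ : ℕ → Bool => τ k) ⁻¹' {σ k} := by
          ext τ
          simp [Finset.mem_range]
        rw [heq]
        refine (Filter.biInter_mem (Finset.range m).finite_toSet).mpr fun k _ => ?_
        have hopen : IsOpen ((fun τ : ℕ → Bool => τ k) ⁻¹' {σ k}) :=
          (isOpen_discrete {σ k}).preimage (continuous_apply k)
        exact hopen.mem_nhds rfl
      exact Filter.mem_of_superset hcyl hsub
    have h2 : @Continuous (ℕ → Bool) Y _ (TopologicalSpace.generateFrom
          {B : Set Y | ∃ (z : Y) (ε : ℝ), 0 < ε ∧ B = {y : Y | d z y < ε}}) φ :=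
      continuous_generateFrom_iff.mpr hgen'
    rwa [← hgen] at h2
  -- injectivity
  have hinj : Function.Injective φ := by
    intro σ τ h
    by_contra hne
    have hex : ∃ m, σ m ≠ τ m := by
      by_contra h'
      push_neg at h'
      exact hne (funext h')
    set m := Nat.find hex with hmdef
    have hm : σ m ≠ τ m := Nat.find_spec hex
    have hlt : ∀ k < m, σ k = τ k := fun k hk => not_not.mp (Nat.find_min hex hk)
    have hpre : preList σ m = preList τ m := preList_eq hlt
    have hKσ : d (u σ (m + 1)) (φ σ) ≤ rad σ (m + 1) := hK σ (m + 1)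
    have hKτ : d (u τ (m + 1)) (φ τ) ≤ rad τ (m + 1) := hK τ (m + 1)
    rw [h] at hKσ
    obtain ⟨_, _, _, _, _, _, _, hsep'⟩ := hF (node (preList σ m)) (hInv _).1 (hInv _).2
    have euσ : u σ (m + 1) = (step (σ m) (node (preList σ m))).1 := rfl
    have euτ : u τ (m + 1) = (step (τ m) (node (preList τ m))).1 := rfl
    have erσ : rad σ (m + 1) = (F (node (preList σ m))).2.2 := rfl
    have erτ : rad τ (m + 1) = (F (node (preList τ m))).2.2 := rfl
    rw [← hpre] at euτ erτ
    cases hσm : σ m <;> cases hτm : τ m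
    · exact hm (hσm.trans hτm.symm)
    · rw [hσm] at euσ
      rw [hτm] at euτ
      exact hsep' (φ τ) ⟨by rw [euτ] at hKτ; rw [erτ] at hKτ; exact hKτ,
        by rw [euσ] at hKσ; rw [erσ] at hKσ; exact hKσ⟩
    · rw [hσm] at euσ
      rw [hτm] at euτ
      exact hsep' (φ τ) ⟨by rw [euσ] at hKσ; rw [erσ] at hKσ; exact hKσ,
        by rw [euτ] at hKτ; rw [erτ] at hKτ; exact hKτ⟩
    · exact hm (hσm.trans hτm.symm)
  exact ⟨φ, (hcont.isClosedEmbedding hinj).toIsEmbedding⟩
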